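/- Let G be a finite p-group of order p^n. Then the Schur multiplier M(G) has order at most p^{n(n-1)/2}. -/

import Mathlib

open Subgroup

open scoped commutatorElement

lemma GreenAux.normal_of_le_center {H : Type*} [Group H] {Z : Subgroup H}
    (h : Z ≤ Subgroup.center H) : Z.Normal :=
  ⟨fun x hx g => by
    have hc := Subgroup.mem_center_iff.mp (h hx) g
    rw [hc, mul_assoc, mul_inv_cancel, mul_one]
    exact hx⟩

/-- Key inductive lemma: if `Z` is a central subgroup of `H` with `|H/Z|` dividing `p^n`,
then `|Z ∩ [H,H]|` divides `p^(n choose 2)`. -/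
lemma GreenAux.key (p : ℕ) (hp : p.Prime) :
    ∀ (n : ℕ) (H : Type) (_ : Group H) (Z : Subgroup H),
      Z ≤ Subgroup.center H → Nat.card (H ⧸ Z) ∣ p ^ n →
      Nat.card ↥(Z ⊓ commutator H) ∣ p ^ (n.choose 2) := by
  intro n
  induction n with
  | zero =>
    intro H _ Z hZ hcard
    have h1 : Z = ⊤ := Subgroup.index_eq_one.mp
      (Nat.dvd_one.mp (by rwa [Subgroup.index_eq_card, ← pow_zero p]))
    have h2 : commutator H = ⊥ := by
      rw [_root_.commutator_def, eq_bot_iff]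
      refine Subgroup.commutator_le.mpr fun g hg h hh => ?_
      rw [Subgroup.mem_bot, commutatorElement_eq_one_iff_commute]
      exact (Subgroup.mem_center_iff.mp (hZ (h1 ▸ Subgroup.mem_top g)) h).symm
    simp [h2]
  | succ n IH =>
    intro H _ Z hZ hcard
    haveI hZN : Z.Normal := GreenAux.normal_of_le_center hZ
    by_cases h1 : Nat.card (H ⧸ Z) = 1
    · have hZtop : Z = ⊤ := Subgroup.index_eq_one.mp (by rwa [Subgroup.index_eq_card])
      have h2 : commutator H = ⊥ := by
        rw [_root_.commutator_def, eq_bot_iff]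
        refine Subgroup.commutator_le.mpr fun g hg h hh => ?_
        rw [Subgroup.mem_bot, commutatorElement_eq_one_iff_commute]
        exact (Subgroup.mem_center_iff.mp (hZ (hZtop ▸ Subgroup.mem_top g)) h).symm
      simp [h2]
    · -- the quotient is a nontrivial finite p-group
      have hne : Nat.card (H ⧸ Z) ≠ 0 := by
        intro h0
        rw [h0] at hcard
        exact (pow_ne_zero (n + 1) hp.ne_zero) (Nat.eq_zero_of_zero_dvd hcard)
      haveI : Finite (H ⧸ Z) := Nat.finite_of_card_ne_zero hne
      haveI : Nontrivial (H ⧸ Z) := Finite.one_lt_card_iff_nontrivial.mp (by omega)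
      haveI : Fact p.Prime := ⟨hp⟩
      obtain ⟨k, hk, hcardeq⟩ := (Nat.dvd_prime_pow hp).mp hcard
      haveI := IsPGroup.center_nontrivial (IsPGroup.of_card hcardeq)
      obtain ⟨zb, hzb⟩ := exists_ne (1 : Subgroup.center (H ⧸ Z))
      obtain ⟨z, hzq⟩ := QuotientGroup.mk'_surjective Z (zb : H ⧸ Z)
      rw [QuotientGroup.mk'_apply] at hzq
      -- commutators with z are in Z
      have hzc : ∀ g : H, ⁅z, g⁆ ∈ Z := by
        intro g
        rw [← QuotientGroup.eq_one_iff, commutatorElement_def]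
        rw [QuotientGroup.mk_mul, QuotientGroup.mk_mul, QuotientGroup.mk_mul,
          QuotientGroup.mk_inv, QuotientGroup.mk_inv, hzq]
        rw [← Subgroup.mem_center_iff.mp zb.2 (↑g : H ⧸ Z)]
        group
      have hznZ : z ∉ Z := by
        intro hzZ
        apply hzb
        have : ((zb : H ⧸ Z)) = 1 := hzq ▸ (QuotientGroup.eq_one_iff z).mpr hzZ
        exact Subtype.ext this
      have hKcen : ∀ g : H, ⁅z, g⁆ ∈ Subgroup.center H := fun g => hZ (hzc g)
      -- the homomorphism g ↦ ⁅z, g⁆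
      let φ : H →* H := {
        toFun := fun g => ⁅z, g⁆
        map_one' := commutatorElement_one_right z
        map_mul' := by
          intro a b
          have hcb := Subgroup.mem_center_iff.mp (hKcen b) a
          show ⁅z, a * b⁆ = ⁅z, a⁆ * ⁅z, b⁆
          have h2 : ⁅z, a * b⁆ = ⁅z, a⁆ * (a * ⁅z, b⁆ * a⁻¹) := by
            simp only [commutatorElement_def]
            group
          rw [h2, hcb]
          group }
      have hφ : ∀ g : H, φ g = ⁅z, g⁆ := fun g => rfl
      let K := φ.range
      have hKZ : K ≤ Z := by rintro x ⟨g, rfl⟩; exact hzc g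
      have hKC : K ≤ commutator H := by
        rintro x ⟨g, rfl⟩
        rw [_root_.commutator_def]
        exact Subgroup.commutator_mem_commutator (Subgroup.mem_top z) (Subgroup.mem_top g)
      haveI hKN : K.Normal := GreenAux.normal_of_le_center (hKZ.trans hZ)
      -- the subgroup W = ⟨Z, z⟩
      let W := Subgroup.comap (QuotientGroup.mk' Z) (Subgroup.zpowers ((zb : H ⧸ Z)))
      have hZW : Z ≤ W := by
        intro ζ hζ
        rw [Subgroup.mem_comap, QuotientGroup.mk'_apply, (QuotientGroup.eq_one_iff ζ).mpr hζ]
        exact one_mem _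
      have hzW : z ∈ W := by
        rw [Subgroup.mem_comap, QuotientGroup.mk'_apply, hzq]
        exact Subgroup.mem_zpowers _
      have hdecomp : ∀ w ∈ W, ∃ (j : ℤ) (ζ : H), ζ ∈ Z ∧ w = z ^ j * ζ := by
        intro w hw
        rw [Subgroup.mem_comap, QuotientGroup.mk'_apply, Subgroup.mem_zpowers_iff] at hw
        obtain ⟨j, hj⟩ := hw
        refine ⟨j, (z ^ j)⁻¹ * w, ?_, by group⟩
        rw [← QuotientGroup.eq_one_iff, QuotientGroup.mk_mul, QuotientGroup.mk_inv,
          QuotientGroup.mk_zpow, hzq, hj]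
        group
      have hWker : ∀ w ∈ W, φ w = 1 := by
        intro w hw
        obtain ⟨j, ζ, hζ, rfl⟩ := hdecomp w hw
        have hφz : φ z = 1 := commutatorElement_self z
        have hφζ : φ ζ = 1 := commutatorElement_eq_one_iff_commute.mpr
          (Subgroup.mem_center_iff.mp (hZ hζ) z)
        rw [map_mul, map_zpow, hφz, hφζ, one_zpow, one_mul]
      -- the index of W divides p ^ n
      haveI hzbN : (Subgroup.zpowers ((zb : H ⧸ Z))).Normal :=
        GreenAux.normal_of_le_center (Subgroup.zpowers_le.mpr zb.2)
      haveI hWN : W.Normal := hzbN.comap _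
      have hWindex : W.index ∣ p ^ n := by
        have h3 : Z.relIndex W * W.index = Z.index := Subgroup.relIndex_mul_index hZW
        have h4 : Z.index ∣ p ^ (n + 1) := by rwa [Subgroup.index_eq_card]
        have h5 : Z.relIndex W ∣ p ^ (n + 1) :=
          (Subgroup.relIndex_dvd_index_of_le hZW).trans h4
        obtain ⟨j, hj, hjeq⟩ := (Nat.dvd_prime_pow hp).mp h5
        have hj1 : Z.relIndex W ≠ 1 := fun he => hznZ (Subgroup.relIndex_eq_one.mp he hzW)
        have hj0 : j ≠ 0 := by
          rintro rfl
          rw [pow_zero] at hjeq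
          exact hj1 hjeq
        have hpd : p ∣ Z.relIndex W := hjeq ▸ dvd_pow_self p hj0
        obtain ⟨c, hc⟩ := hpd
        have h6 : W.index * p ∣ p ^ (n + 1) := by
          refine dvd_trans ⟨c, ?_⟩ h4
          rw [← h3, hc]
          ring
        rw [pow_succ] at h6
        exact (Nat.mul_dvd_mul_iff_right hp.pos).mp h6
      -- the order of K divides p ^ n
      have hWsubker : W ≤ φ.ker := fun w hw => hWker w hw
      have hKcard : Nat.card K ∣ p ^ n := by
        have e := QuotientGroup.quotientKerEquivRange φ
        have h7 : Nat.card K = φ.ker.index := by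
          rw [Subgroup.index_eq_card]
          exact (Nat.card_congr e.toEquiv).symm
        rw [h7]
        exact (Subgroup.index_dvd_of_le hWsubker).trans hWindex
      -- pass to the quotient by K
      let q := QuotientGroup.mk' K
      let Zt := W.map q
      have hWsup : W = Subgroup.zpowers z ⊔ Z := by
        apply le_antisymm
        · intro w hw
          obtain ⟨j, ζ, hζ, rfl⟩ := hdecomp w hw
          exact mul_mem (Subgroup.mem_sup_left (zpow_mem (Subgroup.mem_zpowers z) j))
            (Subgroup.mem_sup_right hζ)
        · exact sup_le (Subgroup.zpowers_le.mpr hzW) hZW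
      have hZtc : Zt ≤ Subgroup.center (H ⧸ K) := by
        show W.map q ≤ _
        rw [hWsup, Subgroup.map_sup]
        refine sup_le ?_ ?_
        · rw [MonoidHom.map_zpowers]
          refine Subgroup.zpowers_le.mpr ?_
          rw [Subgroup.mem_center_iff]
          intro g'
          obtain ⟨g, rfl⟩ := QuotientGroup.mk'_surjective K g'
          rw [← map_mul, ← map_mul]
          have hinv : (φ g⁻¹)⁻¹ ∈ K := inv_mem (MonoidHom.mem_range.mpr ⟨g⁻¹, rfl⟩)
          have hcen := Subgroup.mem_center_iff.mp ((hKZ.trans hZ) hinv) z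
          show ((g * z : H) : H ⧸ K) = ((z * g : H) : H ⧸ K)
          rw [QuotientGroup.eq]
          have h9 : (g * z)⁻¹ * (z * g) = z⁻¹ * ((φ g⁻¹)⁻¹ * z) := by
            rw [hφ]
            simp only [commutatorElement_def]
            group
          rw [h9, ← hcen, ← mul_assoc, inv_mul_cancel, one_mul]
          exact hinv
        · rintro x ⟨ζ, hζ, rfl⟩
          rw [Subgroup.mem_center_iff]
          intro g'
          obtain ⟨g, rfl⟩ := QuotientGroup.mk'_surjective K g'
          rw [← map_mul, ← map_mul, Subgroup.mem_center_iff.mp (hZ hζ) g]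
      haveI hZtN : Zt.Normal := GreenAux.normal_of_le_center hZtc
      have hKW : K ≤ W := hKZ.trans hZW
      have hcardQt : Nat.card ((H ⧸ K) ⧸ Zt) ∣ p ^ n := by
        have e := QuotientGroup.quotientQuotientEquivQuotient K W hKW
        have : Nat.card ((H ⧸ K) ⧸ Zt) = Nat.card (H ⧸ W) := Nat.card_congr e.toEquiv
        rw [this, ← Subgroup.index_eq_card]
        exact hWindex
      have hT := IH (H ⧸ K) inferInstance Zt hZtc hcardQt
      -- assemble the bound
      let S := Z ⊓ commutator H
      let f : ↥S →* H ⧸ K := q.comp S.subtype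
      have hrange : f.range ≤ Zt ⊓ commutator (H ⧸ K) := by
        rintro x ⟨s, rfl⟩
        obtain ⟨hsZ, hsC⟩ := s.2
        refine Subgroup.mem_inf.mpr ⟨Subgroup.mem_map_of_mem q (hZW hsZ), ?_⟩
        have h10 : Subgroup.map q (commutator H) ≤ commutator (H ⧸ K) := by
          rw [_root_.commutator_def, Subgroup.map_commutator, _root_.commutator_def]
          exact Subgroup.commutator_mono le_top le_top
        exact h10 (Subgroup.mem_map_of_mem q hsC)
      have hKS : K ≤ S := le_inf hKZ hKC
      have hkerf : f.ker = K.subgroupOf S := by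
        show ((QuotientGroup.mk' K).comp S.subtype).ker = _
        rw [← MonoidHom.comap_ker, QuotientGroup.ker_mk']
        rfl
      have hcS : Nat.card ↥S = Nat.card (↥S ⧸ f.ker) * Nat.card f.ker :=
        Subgroup.card_eq_card_quotient_mul_card_subgroup f.ker
      have hc1 : Nat.card (↥S ⧸ f.ker) = Nat.card f.range :=
        Nat.card_congr (QuotientGroup.quotientKerEquivRange f).toEquiv
      have hc2 : Nat.card f.ker = Nat.card K := by
        rw [hkerf]
        exact Nat.card_congr (Subgroup.subgroupOfEquivOfLe hKS).toEquiv
      have hc3 : Nat.card f.range ∣ Nat.card ↥(Zt ⊓ commutator (H ⧸ K)) :=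
        Subgroup.card_dvd_of_le hrange
      have hfinal : Nat.card ↥S ∣ p ^ (n.choose 2) * p ^ n := by
        rw [hcS, hc1, hc2]
        exact mul_dvd_mul (hc3.trans hT) hKcard
      have hexp : p ^ (n.choose 2) * p ^ n = p ^ ((n + 1).choose 2) := by
        rw [← pow_add, Nat.choose_succ_succ, Nat.choose_one_right, Nat.add_comm]
      rw [hexp] at hfinal
      exact hfinal

/-- Witt formula: number of basic commutators of weight `n` on `d` letters. -/
def wittChi (n d : ℕ) : ℕ :=
  ((∑ m ∈ n.divisors, ArithmeticFunction.moebius m * (d : ℤ) ^ (n / m)) / n).toNat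

/-- `iterCommutator R c = [R, F, …, F]` with `c` copies of `F`. -/
def iterCommutator {F : Type*} [Group F] (R : Subgroup F) : ℕ → Subgroup F
  | 0 => R
  | c + 1 => ⁅iterCommutator R c, (⊤ : Subgroup F)⁆

instance iterCommutator_normal {F : Type*} [Group F] (R : Subgroup F) [h : R.Normal]
    (c : ℕ) : (iterCommutator R c).Normal := by
  induction c with
  | zero => exact h
  | succ n ih => exact Subgroup.commutator_normal _ _

/-- A free presentation `1 → R → F → G → 1` of a group `G`. -/
structure FreePresentation (G : Type) [Group G] where
  ι : Type
  π : FreeGroup ι →* G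
  surj : Function.Surjective π

/-- The `c`-nilpotent multiplier `M^(c)(G) = (R ∩ γ_{c+1}(F)) / [R, _c F]`
(the Schur multiplier when `c = 1`), realized as a subgroup of `F / [R, _c F]`. -/
def nilMult {G : Type} [Group G] (P : FreePresentation G) (c : ℕ) :
    Subgroup (FreeGroup P.ι ⧸ iterCommutator P.π.ker c) :=
  Subgroup.map (QuotientGroup.mk' (iterCommutator P.π.ker c))
    (P.π.ker ⊓ Subgroup.lowerCentralSeries (⊤ : Subgroup (FreeGroup P.ι)) c)

/-- Green's theorem: the Schur multiplier of a finite `p`-group of order `p^n`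
has order at most `p^{n(n-1)/2}`. -/
theorem green_bound (G : Type) [Group G] (p n : ℕ) (hp : p.Prime)
    (hG : Nat.card G = p ^ n) (P : FreePresentation G) :
    Nat.card (nilMult P 1) ≤ p ^ (n * (n - 1) / 2) := by
  classical
  set F := FreeGroup P.ι
  set R := P.π.ker with hR
  have hN1 : iterCommutator R 1 = ⁅R, (⊤ : Subgroup F)⁆ := rfl
  set N := iterCommutator R 1 with hNdef
  haveI hNn : N.Normal := iterCommutator_normal R 1
  have hNR : N ≤ R := by
    exact Subgroup.commutator_le_left R ⊤
  set Z := R.map (QuotientGroup.mk' N) with hZdef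
  have hZc : Z ≤ Subgroup.center (F ⧸ N) := by
    rintro x ⟨r, hr, rfl⟩
    rw [Subgroup.mem_center_iff]
    intro g'
    obtain ⟨g, rfl⟩ := QuotientGroup.mk'_surjective N g'
    rw [← map_mul, ← map_mul]
    show ((g * r : F) : F ⧸ N) = ((r * g : F) : F ⧸ N)
    rw [QuotientGroup.eq]
    have : (g * r)⁻¹ * (r * g) = ⁅r⁻¹, g⁻¹⁆ := by
      simp only [commutatorElement_def]
      group
    rw [this]
    show ⁅r⁻¹, g⁻¹⁆ ∈ ⁅R, (⊤ : Subgroup F)⁆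
    exact Subgroup.commutator_mem_commutator (inv_mem hr) (Subgroup.mem_top g⁻¹)
  haveI hZN : Z.Normal := GreenAux.normal_of_le_center hZc
  have hcardQ : Nat.card ((F ⧸ N) ⧸ Z) ∣ p ^ n := by
    have e1 := QuotientGroup.quotientQuotientEquivQuotient N R hNR
    have e2 := QuotientGroup.quotientKerEquivOfSurjective P.π P.surj
    rw [Nat.card_congr e1.toEquiv, Nat.card_congr e2.toEquiv, hG]
  have hdvd := GreenAux.key p hp n (F ⧸ N) inferInstance Z hZc hcardQ
  have hle : nilMult P 1 ≤ Z ⊓ commutator (F ⧸ N) := by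
    refine le_trans (Subgroup.map_inf_le _ _ _) (inf_le_inf ?_ ?_)
    · exact le_rfl
    · have h11 : Subgroup.lowerCentralSeries (⊤ : Subgroup F) 1 = commutator F :=
          Subgroup.top_lowerCentralSeries_one
      rw [h11, _root_.commutator_def, Subgroup.map_commutator, _root_.commutator_def]
      exact Subgroup.commutator_mono le_top le_top
  have hfin : Nat.card ↥(Z ⊓ commutator (F ⧸ N)) ≠ 0 := by
    intro h0
    rw [h0] at hdvd
    exact pow_ne_zero (n.choose 2) hp.ne_zero (Nat.eq_zero_of_zero_dvd hdvd)
  haveI : Finite ↥(Z ⊓ commutator (F ⧸ N)) := Nat.finite_of_card_ne_zero hfin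
  calc Nat.card (nilMult P 1) ≤ Nat.card ↥(Z ⊓ commutator (F ⧸ N)) :=
        Subgroup.card_le_of_le hle
    _ ≤ p ^ (n.choose 2) := Nat.le_of_dvd (pow_pos hp.pos _) hdvd
    _ = p ^ (n * (n - 1) / 2) := by rw [Nat.choose_two_right]
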